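/- Let q, m ≥ 2 be integers with gcd(m, q-1) = 1, let h ≥ 1 and u ≥ 1 be integers with q^u ≥ 2hq(6q)^h, and let m₀, m₁, m₂, m₃ be integers with q^(u-1) ≤ m₀, m₂, m₃ < q^u and 1 ≤ m₁ < q^u/(hq(6q)^h). Write t(x) = m₃x³ + m₂x² − m₁x + m₀. Then for every integer g there exists an integer k with hu + 2h + 1 ≤ k ≤ hu + 2h + m such that s_q(t(q^k)^h) ≡ g (mod m). -/
import Mathlib


open Polynomial

/-- `digitSum q n` is the sum of digits of `n` in base `q`. -/
def digitSum (q n : ℕ) : ℕ := (Nat.digits q n).sum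
lemma digitSum_add_pow_mul {q : ℕ} (hq : 2 ≤ q) (n a b : ℕ) (ha : a < q ^ n) :
    digitSum q (a + q ^ n * b) = digitSum q a + digitSum q b := by
  rcases Nat.eq_zero_or_pos b with rfl | hb
  · simp [digitSum]
  · have hlen : (Nat.digits q a).length ≤ n := by
      rcases Nat.eq_zero_or_pos a with rfl | ha0
      · simp
      · rw [Nat.digits_len q a (by omega) (by omega)]
        have := Nat.log_lt_of_lt_pow (by omega : a ≠ 0) ha
        omega
    have key := Nat.digits_append_zeroes_append_digits
      (b := q) (k := n - (Nat.digits q a).length) (m := b) (n := a) (by omega) hb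
    rw [show (Nat.digits q a).length + (n - (Nat.digits q a).length) = n from by omega] at key
    unfold digitSum
    rw [← key]
    simp

lemma digitSum_pow_sub_one {q : ℕ} (hq : 2 ≤ q) (n : ℕ) :
    digitSum q (q ^ n - 1) = (q - 1) * n := by
  induction n with
  | zero => simp [digitSum]
  | succ n ih =>
    have h1 : 1 ≤ q ^ n := Nat.one_le_pow _ _ (by omega)
    have h2 : q ^ (n + 1) = q * q ^ n := by ring
    have h3 : q ^ (n + 1) - 1 = (q - 1) + q ^ 1 * (q ^ n - 1) := by
      rw [pow_one]
      have e1 : q * (q ^ n - 1) = q * q ^ n - q * 1 := Nat.mul_sub q _ _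
      have e2 : q * q ^ n = q ^ (n + 1) := (pow_succ' q n).symm
      have e3 : q ≤ q ^ (n + 1) := Nat.le_self_pow (by omega) q
      omega
    rw [h3, digitSum_add_pow_mul hq 1 _ _ (by simpa using Nat.sub_lt (by omega) one_pos), ih]
    have h4 : digitSum q (q - 1) = q - 1 := by
      unfold digitSum
      rw [Nat.digits_def' (by omega : 1 < q) (by omega : 0 < q - 1)]
      rw [Nat.mod_eq_of_lt (by omega), Nat.div_eq_of_lt (by omega)]
      simp
    rw [h4]; ring

lemma digitSum_blocks {q : ℕ} (hq : 2 ≤ q) (K : ℕ) (n : ℕ) (f : ℕ → ℕ)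
    (hf : ∀ i, i < n → f i < q ^ K) :
    digitSum q (∑ i ∈ Finset.range n, f i * (q ^ K) ^ i)
      = ∑ i ∈ Finset.range n, digitSum q (f i) := by
  induction n generalizing f with
  | zero => simp [digitSum]
  | succ n ih =>
    rw [Finset.sum_range_succ' (fun i => f i * (q ^ K) ^ i) n]
    have e : (∑ i ∈ Finset.range n, f (i + 1) * (q ^ K) ^ (i + 1)) + f 0 * (q ^ K) ^ 0
        = f 0 + q ^ K * ∑ i ∈ Finset.range n, f (i + 1) * (q ^ K) ^ i := by
      rw [Finset.mul_sum]
      simp only [pow_zero, mul_one]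
      rw [add_comm]
      congr 1
      apply Finset.sum_congr rfl
      intro i _
      ring
    rw [e, digitSum_add_pow_mul hq K _ _ (hf 0 (by omega)), ih (fun i => f (i+1)) (fun i hi => hf (i+1) (by omega))]
    rw [Finset.sum_range_succ' (fun i => digitSum q (f i)) n]
    ring

section Coeffs
variable (m₀ m₁ m₂ m₃ : ℤ)

lemma coeff_mul_t (p : ℤ[X]) (j : ℕ) :
    (p * (C m₃ * X ^ 3 + C m₂ * X ^ 2 - C m₁ * X + C m₀)).coeff j =
      (if 3 ≤ j then p.coeff (j - 3) else 0) * m₃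
      + (if 2 ≤ j then p.coeff (j - 2) else 0) * m₂
      - (if 1 ≤ j then p.coeff (j - 1) else 0) * m₁
      + p.coeff j * m₀ := by
  have e : p * (C m₃ * X ^ 3 + C m₂ * X ^ 2 - C m₁ * X + C m₀)
      = p * X ^ 3 * C m₃ + p * X ^ 2 * C m₂ - p * X ^ 1 * C m₁ + p * C m₀ := by ring
  rw [e]
  simp only [coeff_add, coeff_sub, coeff_mul_C, Polynomial.coeff_mul_X_pow', ite_mul, zero_mul]

lemma coeff_mul_s (p : ℤ[X]) (j : ℕ) :
    (p * (C m₃ * X ^ 3 + C m₂ * X ^ 2 + C m₀)).coeff j =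
      (if 3 ≤ j then p.coeff (j - 3) else 0) * m₃
      + (if 2 ≤ j then p.coeff (j - 2) else 0) * m₂
      + p.coeff j * m₀ := by
  have e : p * (C m₃ * X ^ 3 + C m₂ * X ^ 2 + C m₀)
      = p * X ^ 3 * C m₃ + p * X ^ 2 * C m₂ + p * C m₀ := by ring
  rw [e]
  simp only [coeff_add, coeff_mul_C, Polynomial.coeff_mul_X_pow', ite_mul, zero_mul]

lemma coeff_t (j : ℕ) :
    (C m₃ * X ^ 3 + C m₂ * X ^ 2 - C m₁ * X + C m₀).coeff j =
      (if j = 3 then m₃ else 0) + (if j = 2 then m₂ else 0)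
      - (if j = 1 then m₁ else 0) + (if j = 0 then m₀ else 0) := by
  have e : C m₃ * X ^ 3 + C m₂ * X ^ 2 - C m₁ * X + C m₀
      = 1 * (C m₃ * X ^ 3 + C m₂ * X ^ 2 - C m₁ * X + C m₀) := by ring
  rw [e, coeff_mul_t]
  rcases j with _ | _ | _ | _ | j <;>
    simp [Polynomial.coeff_one]

lemma coeff_s (j : ℕ) :
    (C m₃ * X ^ 3 + C m₂ * X ^ 2 + C m₀).coeff j =
      (if j = 3 then m₃ else 0) + (if j = 2 then m₂ else 0) + (if j = 0 then m₀ else 0) := by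
  have e : C m₃ * X ^ 3 + C m₂ * X ^ 2 + C m₀
      = 1 * (C m₃ * X ^ 3 + C m₂ * X ^ 2 + C m₀) := by ring
  rw [e, coeff_mul_s]
  rcases j with _ | _ | _ | _ | j <;>
    simp [Polynomial.coeff_one]

end Coeffs

section Ind
variable {q u : ℕ} {m₀ m₁ m₂ m₃ : ℤ}

lemma s_coeff_nonneg (h0 : 0 ≤ m₀) (h2 : 0 ≤ m₂) (h3 : 0 ≤ m₃) :
    ∀ n j, 0 ≤ ((C m₃ * X ^ 3 + C m₂ * X ^ 2 + C m₀) ^ n).coeff j := by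
  intro n
  induction n with
  | zero => intro j; rcases j with _ | j <;> simp [Polynomial.coeff_one]
  | succ n ih =>
    intro j
    rw [pow_succ, coeff_mul_s]
    have := ih j
    have := ih (j - 2)
    have := ih (j - 3)
    split_ifs <;> positivity

lemma s_coeff_lb (hq : 2 ≤ q)
    (hm₀ : (q : ℤ) ^ (u - 1) ≤ m₀) (hm₂ : (q : ℤ) ^ (u - 1) ≤ m₂)
    (hm₃ : (q : ℤ) ^ (u - 1) ≤ m₃) :
    ∀ n j, (j = 0 ∨ (2 ≤ j ∧ j ≤ 3 * n)) →
      (q : ℤ) ^ (n * (u - 1)) ≤ ((C m₃ * X ^ 3 + C m₂ * X ^ 2 + C m₀) ^ n).coeff j := by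
  have hq1 : (1 : ℤ) ≤ (q : ℤ) ^ (u - 1) := one_le_pow₀ (by exact_mod_cast by omega : (1:ℤ) ≤ q)
  have h0 : 0 ≤ m₀ := le_trans (by linarith) hm₀
  have h2 : 0 ≤ m₂ := le_trans (by linarith) hm₂
  have h3 : 0 ≤ m₃ := le_trans (by linarith) hm₃
  intro n
  induction n with
  | zero =>
    intro j hj
    have : j = 0 := by omega
    subst this
    simp [Polynomial.coeff_one]
  | succ n ih =>
    intro j hj
    rw [pow_succ, coeff_mul_s]
    have key : ∀ jj, (jj = 0 ∨ (2 ≤ jj ∧ jj ≤ 3 * n)) → ∀ c, (q:ℤ)^(u-1) ≤ c →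
        (q : ℤ) ^ ((n+1) * (u - 1)) ≤
          ((C m₃ * X ^ 3 + C m₂ * X ^ 2 + C m₀) ^ n).coeff jj * c := by
      intro jj hjj c hc
      have hnn : (0:ℤ) ≤ ((C m₃ * X ^ 3 + C m₂ * X ^ 2 + C m₀) ^ n).coeff jj :=
        s_coeff_nonneg h0 h2 h3 n jj
      calc (q : ℤ) ^ ((n+1) * (u - 1)) = (q:ℤ) ^ (n * (u-1)) * (q:ℤ)^(u-1) := by
            rw [← pow_add]; ring_nf
        _ ≤ _ := by
            apply mul_le_mul (ih jj hjj) hc (by positivity)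
            exact le_trans (by positivity) (ih jj hjj)
    have b0 : 0 ≤ (if 3 ≤ j then ((C m₃ * X ^ 3 + C m₂ * X ^ 2 + C m₀) ^ n).coeff (j-3) else 0) * m₃ := by
      split_ifs
      · exact mul_nonneg (s_coeff_nonneg h0 h2 h3 n _) h3
      · simp
    have b2 : 0 ≤ (if 2 ≤ j then ((C m₃ * X ^ 3 + C m₂ * X ^ 2 + C m₀) ^ n).coeff (j-2) else 0) * m₂ := by
      split_ifs
      · exact mul_nonneg (s_coeff_nonneg h0 h2 h3 n _) h2
      · simp
    have bj : 0 ≤ ((C m₃ * X ^ 3 + C m₂ * X ^ 2 + C m₀) ^ n).coeff j * m₀ :=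
      mul_nonneg (s_coeff_nonneg h0 h2 h3 n _) h0
    rcases hj with rfl | ⟨hj2, hj3⟩
    · -- j = 0 : use m₀ term
      have := key 0 (Or.inl rfl) m₀ hm₀
      simp only [if_neg (by omega : ¬ 3 ≤ 0), if_neg (by omega : ¬ 2 ≤ 0), zero_mul]
      linarith
    · rcases le_or_gt j (3 * n) with hle | hgt
      · have := key j (Or.inr ⟨hj2, hle⟩) m₀ hm₀
        linarith
      · rcases Nat.lt_or_ge j (3 * n + 3) with hlt | hge
        · -- j = 3n+1 or 3n+2 : use m₂ term, jj = j - 2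
          have hj2' : 2 ≤ j := hj2
          have hcase : j - 2 = 0 ∨ (2 ≤ j - 2 ∧ j - 2 ≤ 3 * n) := by omega
          have := key (j - 2) hcase m₂ hm₂
          rw [if_pos hj2'] at *
          linarith
        · -- j = 3n+3 : use m₃ term
          have hj3' : 3 ≤ j := by omega
          have hjeq : j = 3 * n + 3 := by omega
          have hcase : j - 3 = 0 ∨ (2 ≤ j - 3 ∧ j - 3 ≤ 3 * n) := by omega
          have := key (j - 3) hcase m₃ hm₃
          rw [if_pos hj3'] at *
          linarith

end Ind

section Ind2
variable {q u : ℕ} {m₀ m₁ m₂ m₃ : ℤ}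

lemma abs_coeff_mul_t_le {p : ℤ[X]} {A Qu : ℤ}
    (h0 : |m₀| ≤ Qu) (h1 : |m₁| ≤ Qu) (h2 : |m₂| ≤ Qu) (h3 : |m₃| ≤ Qu)
    (hp : ∀ j, |p.coeff j| ≤ A) :
    ∀ j, |(p * (C m₃ * X ^ 3 + C m₂ * X ^ 2 - C m₁ * X + C m₀)).coeff j| ≤ 4 * Qu * A := by
  intro j
  have hA : 0 ≤ A := le_trans (abs_nonneg _) (hp 0)
  rw [coeff_mul_t]
  have key : ∀ (b : Prop) [Decidable b] (i : ℕ) (c : ℤ), |c| ≤ Qu →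
      |(if b then p.coeff i else 0) * c| ≤ A * Qu := by
    intro b _ i c hc
    rw [abs_mul]
    split_ifs with hb
    · exact mul_le_mul (hp i) hc (abs_nonneg _) hA
    · simpa using mul_nonneg hA (le_trans (abs_nonneg _) hc)
  have k3 := key (3 ≤ j) (j-3) m₃ h3
  have k2 := key (2 ≤ j) (j-2) m₂ h2
  have k1 := key (1 ≤ j) (j-1) m₁ h1
  have k0 : |p.coeff j * m₀| ≤ A * Qu := by
    rw [abs_mul]; exact mul_le_mul (hp j) h0 (abs_nonneg _) hA
  have hAQ : 0 ≤ A * Qu := le_trans (abs_nonneg _) k0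
  have step : |(if 3 ≤ j then p.coeff (j - 3) else 0) * m₃
      + (if 2 ≤ j then p.coeff (j - 2) else 0) * m₂
      - (if 1 ≤ j then p.coeff (j - 1) else 0) * m₁
      + p.coeff j * m₀| ≤ A * Qu + A * Qu + A * Qu + A * Qu := by
    apply le_trans (abs_add_le _ _)
    apply add_le_add _ k0
    apply le_trans (abs_sub _ _)
    apply add_le_add _ k1
    exact le_trans (abs_add_le _ _) (add_le_add k3 k2)
  linarith

lemma abs_coeff_mul_s_le {p : ℤ[X]} {A Qu : ℤ}
    (h0 : |m₀| ≤ Qu) (h2 : |m₂| ≤ Qu) (h3 : |m₃| ≤ Qu)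
    (hp : ∀ j, |p.coeff j| ≤ A) :
    ∀ j, |(p * (C m₃ * X ^ 3 + C m₂ * X ^ 2 + C m₀)).coeff j| ≤ 4 * Qu * A := by
  intro j
  have hA : 0 ≤ A := le_trans (abs_nonneg _) (hp 0)
  have hQu : 0 ≤ Qu := le_trans (abs_nonneg _) h0
  rw [coeff_mul_s]
  have key : ∀ (b : Prop) [Decidable b] (i : ℕ) (c : ℤ), |c| ≤ Qu →
      |(if b then p.coeff i else 0) * c| ≤ A * Qu := by
    intro b _ i c hc
    rw [abs_mul]
    split_ifs with hb
    · exact mul_le_mul (hp i) hc (abs_nonneg _) hA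
    · simpa using mul_nonneg hA hQu
  have k3 := key (3 ≤ j) (j-3) m₃ h3
  have k2 := key (2 ≤ j) (j-2) m₂ h2
  have k0 : |p.coeff j * m₀| ≤ A * Qu := by
    rw [abs_mul]; exact mul_le_mul (hp j) h0 (abs_nonneg _) hA
  have hAQ : 0 ≤ A * Qu := le_trans (abs_nonneg _) k0
  have step : |(if 3 ≤ j then p.coeff (j - 3) else 0) * m₃
      + (if 2 ≤ j then p.coeff (j - 2) else 0) * m₂
      + p.coeff j * m₀| ≤ A * Qu + A * Qu + A * Qu :=
    le_trans (abs_add_le _ _) (add_le_add (le_trans (abs_add_le _ _) (add_le_add k3 k2)) k0)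
  linarith

lemma abs_coeff_t_pow_le {Qu : ℤ}
    (h0 : |m₀| ≤ Qu) (h1 : |m₁| ≤ Qu) (h2 : |m₂| ≤ Qu) (h3 : |m₃| ≤ Qu) :
    ∀ n j, |((C m₃ * X ^ 3 + C m₂ * X ^ 2 - C m₁ * X + C m₀) ^ n).coeff j| ≤ (4 * Qu) ^ n := by
  intro n
  induction n with
  | zero =>
    intro j
    rcases j with _ | j <;> simp [Polynomial.coeff_one]
  | succ n ih =>
    intro j
    rw [pow_succ]
    have := abs_coeff_mul_t_le h0 h1 h2 h3 ih j
    calc |_| ≤ 4 * Qu * (4 * Qu) ^ n := this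
      _ = (4 * Qu) ^ (n + 1) := by ring

lemma abs_coeff_s_pow_le {Qu : ℤ}
    (h0 : |m₀| ≤ Qu) (h2 : |m₂| ≤ Qu) (h3 : |m₃| ≤ Qu) :
    ∀ n j, |((C m₃ * X ^ 3 + C m₂ * X ^ 2 + C m₀) ^ n).coeff j| ≤ (4 * Qu) ^ n := by
  intro n
  induction n with
  | zero =>
    intro j
    rcases j with _ | j <;> simp [Polynomial.coeff_one]
  | succ n ih =>
    intro j
    rw [pow_succ]
    have := abs_coeff_mul_s_le h0 h2 h3 ih j
    calc |_| ≤ 4 * Qu * (4 * Qu) ^ n := this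
      _ = (4 * Qu) ^ (n + 1) := by ring

lemma t_coeff_zero :
    ∀ n : ℕ, ((C m₃ * X ^ 3 + C m₂ * X ^ 2 - C m₁ * X + C m₀) ^ n).coeff 0 = m₀ ^ n := by
  intro n
  induction n with
  | zero => simp
  | succ n ih =>
    rw [pow_succ, coeff_mul_t, ih]
    norm_num
    ring

lemma t_coeff_one :
    ∀ n : ℕ, ((C m₃ * X ^ 3 + C m₂ * X ^ 2 - C m₁ * X + C m₀) ^ (n + 1)).coeff 1
      = -((n : ℤ) + 1) * m₁ * m₀ ^ n := by
  intro n
  induction n with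
  | zero =>
    rw [pow_one, coeff_t]
    norm_num
  | succ n ih =>
    rw [pow_succ, coeff_mul_t, ih, t_coeff_zero]
    norm_num
    push_cast
    ring

end Ind2

section Ind3
variable {m₀ m₁ m₂ m₃ : ℤ}

lemma diff_coeff_bound {Qu : ℤ}
    (h0 : |m₀| ≤ Qu) (h1 : |m₁| ≤ Qu) (h2 : |m₂| ≤ Qu) (h3 : |m₃| ≤ Qu)
    (hm1 : 0 ≤ m₁) :
    ∀ n : ℕ, ∀ j, |((C m₃ * X ^ 3 + C m₂ * X ^ 2 - C m₁ * X + C m₀) ^ (n+1)).coeff j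
        - ((C m₃ * X ^ 3 + C m₂ * X ^ 2 + C m₀) ^ (n+1)).coeff j|
      ≤ ((n : ℤ) + 1) * m₁ * (4 * Qu) ^ n := by
  have hQu : 0 ≤ Qu := le_trans (abs_nonneg _) h0
  intro n
  induction n with
  | zero =>
    intro j
    rw [pow_one, pow_one, coeff_t, coeff_s]
    have e : (if j = 3 then m₃ else 0) + (if j = 2 then m₂ else 0)
        - (if j = 1 then m₁ else 0) + (if j = 0 then m₀ else 0)
        - ((if j = 3 then m₃ else 0) + (if j = 2 then m₂ else 0) + (if j = 0 then m₀ else 0))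
        = -(if j = 1 then m₁ else 0) := by ring
    rw [e, abs_neg]
    split_ifs
    · rw [abs_of_nonneg hm1]; norm_num
    · simp; positivity
  | succ n ih =>
    intro j
    set T : ℤ[X] := C m₃ * X ^ 3 + C m₂ * X ^ 2 - C m₁ * X + C m₀ with hT
    set S : ℤ[X] := C m₃ * X ^ 3 + C m₂ * X ^ 2 + C m₀ with hS
    have key : T ^ (n+2) - S ^ (n+2) = (T ^ (n+1) - S ^ (n+1)) * T + S ^ (n+1) * (T - S) := by
      ring
    have hTS : T - S = (-(C m₁)) * X ^ 1 := by rw [hT, hS]; ring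
    have expand : (T ^ (n+2)).coeff j - (S ^ (n+2)).coeff j
        = ((T ^ (n+1) - S ^ (n+1)) * T).coeff j + (S ^ (n+1) * (T - S)).coeff j := by
      rw [← coeff_add, ← key, coeff_sub]
    rw [expand]
    have b1 : |((T ^ (n+1) - S ^ (n+1)) * T).coeff j| ≤ 4 * Qu * (((n : ℤ) + 1) * m₁ * (4 * Qu) ^ n) := by
      apply abs_coeff_mul_t_le h0 h1 h2 h3
      intro i
      rw [coeff_sub]
      exact ih i
    have b2 : |(S ^ (n+1) * (T - S)).coeff j| ≤ m₁ * (4 * Qu) ^ (n+1) := by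
      have e2 : S ^ (n+1) * (T - S) = (S ^ (n+1) * X ^ 1) * C (-m₁) := by
        rw [hTS]; simp only [map_neg]; ring
      rw [e2, coeff_mul_C, Polynomial.coeff_mul_X_pow', abs_mul]
      have h1' : |(-m₁)| ≤ Qu := by rwa [abs_neg]
      have hcoef : |(if 1 ≤ j then (S^(n+1)).coeff (j-1) else 0)| ≤ (4 * Qu) ^ (n+1) := by
        split_ifs
        · exact abs_coeff_s_pow_le h0 h2 h3 (n+1) _
        · simp; positivity
      calc |if 1 ≤ j then (S^(n+1)).coeff (j-1) else 0| * |(-m₁)|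
          ≤ (4 * Qu) ^ (n+1) * m₁ := by
            apply mul_le_mul hcoef _ (abs_nonneg _) (by positivity)
            rw [abs_neg, abs_of_nonneg hm1]
        _ = m₁ * (4 * Qu) ^ (n+1) := by ring
    calc |_ + _| ≤ |((T ^ (n+1) - S ^ (n+1)) * T).coeff j| + |(S ^ (n+1) * (T - S)).coeff j| :=
          abs_add_le _ _
      _ ≤ 4 * Qu * (((n : ℤ) + 1) * m₁ * (4 * Qu) ^ n) + m₁ * (4 * Qu) ^ (n+1) := add_le_add b1 b2
      _ = ((n : ℤ) + 2) * m₁ * (4 * Qu) ^ (n+1) := by ring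
      _ = ((n + 1 : ℕ) : ℤ) * m₁ * (4 * Qu) ^ (n+1) + m₁ * (4*Qu)^(n+1) := by push_cast; ring
      _ ≤ _ := by push_cast; ring_nf; nlinarith [pow_nonneg (by linarith : (0:ℤ) ≤ 4 * Qu) (n+1), hm1]
  
end Ind3


lemma one_le_mul3 {a b c : ℤ} (ha : 1 ≤ a) (hb : 1 ≤ b) (hc : 1 ≤ c) : 1 ≤ a*b*c := by
  have h1 : (1:ℤ) ≤ a*b := by nlinarith
  nlinarith

set_option maxHeartbeats 4000000 in
theorem exists_k_hitting_residue
    (q m h u : ℕ) (hq : 2 ≤ q) (hm : 2 ≤ m) (hcop : Nat.gcd m (q - 1) = 1)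
    (hh : 1 ≤ h) (hu : 1 ≤ u)
    (hqu : 2 * h * q * (6 * q) ^ h ≤ q ^ u)
    (m₀ m₁ m₂ m₃ : ℤ)
    (hm₀ : (q : ℤ) ^ (u - 1) ≤ m₀) (hm₀' : m₀ < (q : ℤ) ^ u)
    (hm₂ : (q : ℤ) ^ (u - 1) ≤ m₂) (hm₂' : m₂ < (q : ℤ) ^ u)
    (hm₃ : (q : ℤ) ^ (u - 1) ≤ m₃) (hm₃' : m₃ < (q : ℤ) ^ u)
    (hm₁ : 1 ≤ m₁)
    (hm₁' : (m₁ : ℝ) < (q : ℝ) ^ u / ((h : ℝ) * q * (6 * q : ℝ) ^ h))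
    (t : Polynomial ℤ)
    (ht : t = C m₃ * X ^ 3 + C m₂ * X ^ 2 - C m₁ * X + C m₀) :
    ∀ g : ℤ, ∃ k : ℕ, h * u + 2 * h + 1 ≤ k ∧ k ≤ h * u + 2 * h + m ∧
      (digitSum q ((t.eval ((q : ℤ) ^ k)) ^ h).toNat : ℤ) ≡ g [ZMOD m] := by
  intro g
  subst ht
  have hq1 : (1:ℤ) < (q:ℤ) := by exact_mod_cast hq
  have hq0 : (0:ℤ) < (q:ℤ) := by linarith
  have hpow1 : (1:ℤ) ≤ (q:ℤ) ^ (u - 1) := one_le_pow₀ (by linarith)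
  have hm₀0 : 1 ≤ m₀ := le_trans hpow1 hm₀
  have hm₂0 : 1 ≤ m₂ := le_trans hpow1 hm₂
  have hm₃0 : 1 ≤ m₃ := le_trans hpow1 hm₃
  have hQu1 : (1:ℤ) ≤ (q:ℤ)^u := one_le_pow₀ (by linarith)
  have hh1 : (1:ℤ) ≤ (h:ℤ) := by exact_mod_cast hh
  have h6q : (1:ℤ) ≤ (6*(q:ℤ))^h := one_le_pow₀ (by linarith)
  -- real hypothesis to integer
  have hm1q : m₁ * ((h:ℤ) * q * (6*q)^h) < (q:ℤ)^u := by
    have hden : (0:ℝ) < (h:ℝ) * q * ((6:ℝ) * q) ^ h := by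
      have h1 : (0:ℝ) < (q:ℝ) := by exact_mod_cast (by omega : 0 < q)
      have h2 : (0:ℝ) < (h:ℝ) := by exact_mod_cast (by omega : 0 < h)
      positivity
    have h2 := (lt_div_iff₀ hden).mp hm₁'
    exact_mod_cast h2
  have hfac1 : (1:ℤ) ≤ (h:ℤ) * q * (6*q)^h := one_le_mul3 hh1 (by linarith) h6q
  have hm₁Qu : m₁ < (q:ℤ)^u := by
    calc m₁ = m₁ * 1 := by ring
      _ ≤ m₁ * ((h:ℤ)*q*(6*q)^h) := by
          apply mul_le_mul_of_nonneg_left hfac1 (by linarith)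
      _ < (q:ℤ)^u := hm1q
  have habs0 : |m₀| ≤ (q:ℤ)^u := by rw [abs_of_nonneg (by linarith)]; linarith
  have habs1 : |m₁| ≤ (q:ℤ)^u := by rw [abs_of_nonneg (by linarith)]; linarith
  have habs2 : |m₂| ≤ (q:ℤ)^u := by rw [abs_of_nonneg (by linarith)]; linarith
  have habs3 : |m₃| ≤ (q:ℤ)^u := by rw [abs_of_nonneg (by linarith)]; linarith
  -- key inequality
  have KEYIN : (h:ℤ) * m₁ * (4 * (q:ℤ)^u) ^ (h-1) < (q:ℤ) ^ (h*(u-1)) := by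
    have hqh : (0:ℤ) < (q:ℤ)^h := by positivity
    apply lt_of_mul_lt_mul_right _ (le_of_lt hqh)
    have e1 : (q:ℤ) ^ (h*(u-1)) * (q:ℤ)^h = (q:ℤ) ^ (h*u) := by
      rw [← pow_add]
      congr 1
      have : u - 1 + 1 = u := by omega
      calc h*(u-1) + h = h*((u-1)+1) := by ring
        _ = h * u := by rw [this]
    rw [e1]
    have c1 : (4:ℤ)^(h-1) ≤ 6^h := by
      calc (4:ℤ)^(h-1) ≤ 4^h := pow_le_pow_right₀ (by norm_num) (by omega)
        _ ≤ 6^h := pow_le_pow_left₀ (by norm_num) (by norm_num) h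
    have c2 : (q:ℤ)^h ≤ (q:ℤ)^(h+1) := pow_le_pow_right₀ (by linarith) (by omega)
    have e2 : (4 * (q:ℤ)^u) ^ (h-1) * (q:ℤ)^h ≤ ((q:ℤ) * (6*q)^h) * ((q:ℤ)^u)^(h-1) := by
      have e3 : (4 * (q:ℤ)^u) ^ (h-1) * (q:ℤ)^h = (4:ℤ)^(h-1) * (q:ℤ)^h * ((q:ℤ)^u)^(h-1) := by
        rw [mul_pow]; ring
      have e4 : ((q:ℤ) * (6*q)^h) = (6:ℤ)^h * (q:ℤ)^(h+1) := by
        rw [mul_pow]; ring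
      rw [e3, e4]
      have hQpow : (0:ℤ) ≤ ((q:ℤ)^u)^(h-1) := by positivity
      apply mul_le_mul_of_nonneg_right _ hQpow
      exact mul_le_mul c1 c2 (by positivity) (by positivity)
    have hhm1 : (0:ℤ) ≤ (h:ℤ) * m₁ := by positivity
    calc (h:ℤ) * m₁ * (4 * (q:ℤ)^u) ^ (h-1) * (q:ℤ)^h
        = (h:ℤ) * m₁ * ((4 * (q:ℤ)^u) ^ (h-1) * (q:ℤ)^h) := by ring
      _ ≤ (h:ℤ) * m₁ * (((q:ℤ) * (6*q)^h) * ((q:ℤ)^u)^(h-1)) := by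
          apply mul_le_mul_of_nonneg_left e2 hhm1
      _ = (m₁ * ((h:ℤ) * q * (6*q)^h)) * ((q:ℤ)^u)^(h-1) := by ring
      _ < (q:ℤ)^u * ((q:ℤ)^u)^(h-1) := by
          apply mul_lt_mul_of_pos_right hm1q (by positivity)
      _ = ((q:ℤ)^u)^h := by
          rw [← pow_succ']
          congr 1
          omega
      _ = (q:ℤ)^(h*u) := by rw [← pow_mul, Nat.mul_comm]
  -- positivity of coefficients
  have Pos : ∀ j, (j = 0 ∨ (2 ≤ j ∧ j ≤ 3*h)) → 1 ≤ ((C m₃ * X ^ 3 + C m₂ * X ^ 2 - C m₁ * X + C m₀) ^ h).coeff j := by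
    intro j hj
    have hb := s_coeff_lb (u := u) hq hm₀ hm₂ hm₃ h j hj
    have hdiff := diff_coeff_bound habs0 habs1 habs2 habs3 (by linarith : (0:ℤ) ≤ m₁) (h-1) j
    rw [show h - 1 + 1 = h from by omega] at hdiff
    have e2 : ((h - 1 : ℕ) : ℤ) + 1 = (h : ℤ) := by
      push_cast [Nat.cast_sub hh]
      ring
    rw [e2] at hdiff
    have habs := (abs_le.mp hdiff).1
    have hpos : 0 < ((C m₃ * X ^ 3 + C m₂ * X ^ 2 - C m₁ * X + C m₀) ^ h).coeff j := by linarith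
    exact hpos
  have Sz : ∀ j, |((C m₃ * X ^ 3 + C m₂ * X ^ 2 - C m₁ * X + C m₀) ^ h).coeff j| ≤ (4 * (q:ℤ)^u) ^ h := fun j =>
    abs_coeff_t_pow_le habs0 habs1 habs2 habs3 h j
  have SzPow : (4 * (q:ℤ)^u) ^ h ≤ (q:ℤ) ^ (h*u + 2*h) := by
    have c1 : (4:ℤ)^h ≤ ((q:ℤ)^2)^h := by
      apply pow_le_pow_left₀ (by norm_num)
      nlinarith
    calc (4 * (q:ℤ)^u) ^ h = (4:ℤ)^h * ((q:ℤ)^u)^h := by rw [mul_pow]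
      _ ≤ ((q:ℤ)^2)^h * ((q:ℤ)^u)^h := by
          apply mul_le_mul_of_nonneg_right c1 (by positivity)
      _ = (q:ℤ) ^ (2*h) * (q:ℤ)^(u*h) := by rw [← pow_mul, ← pow_mul]
      _ = (q:ℤ) ^ (h*u + 2*h) := by rw [← pow_add]; congr 1; ring
  have a0 : ((C m₃ * X ^ 3 + C m₂ * X ^ 2 - C m₁ * X + C m₀) ^ h).coeff 0 = m₀ ^ h := t_coeff_zero h
  have a1 : ((C m₃ * X ^ 3 + C m₂ * X ^ 2 - C m₁ * X + C m₀) ^ h).coeff 1 = -((h:ℤ) * m₁ * m₀ ^ (h-1)) := by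
    have e1 := t_coeff_one (m₀ := m₀) (m₁ := m₁) (m₂ := m₂) (m₃ := m₃) (h-1)
    rw [show h - 1 + 1 = h from by omega] at e1
    rw [e1]
    have e2 : ((h - 1 : ℕ) : ℤ) + 1 = (h : ℤ) := by
      push_cast [Nat.cast_sub hh]
      ring
    rw [← e2]; ring
  have hBz1 : 1 ≤ (h:ℤ) * m₁ * m₀ ^ (h-1) :=
    one_le_mul3 hh1 hm₁ (one_le_pow₀ hm₀0)
  have hBzlt : (h:ℤ) * m₁ * m₀ ^ (h-1) < (q:ℤ) ^ (h*u) := by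
    have c1 : m₀ ^ (h-1) ≤ ((q:ℤ)^u)^(h-1) :=
      pow_le_pow_left₀ (by linarith) (le_of_lt hm₀') _
    have c2 : (h:ℤ) * m₁ < (q:ℤ)^u := by
      have d1 : (1:ℤ) ≤ (q:ℤ) * (6*(q:ℤ))^h := by
        calc (1:ℤ) = 1*1 := by ring
          _ ≤ (q:ℤ) * (6*(q:ℤ))^h := mul_le_mul (by linarith) h6q (by norm_num) (by linarith)
      calc (h:ℤ)*m₁ ≤ ((h:ℤ)*m₁) * ((q:ℤ)*(6*q)^h) :=
            le_mul_of_one_le_right (by positivity) d1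
        _ = m₁ * ((h:ℤ)*q*(6*q)^h) := by ring
        _ < (q:ℤ)^u := hm1q
    calc (h:ℤ) * m₁ * m₀ ^ (h-1) ≤ (h:ℤ) * m₁ * ((q:ℤ)^u)^(h-1) := by
          apply mul_le_mul_of_nonneg_left c1 (by positivity)
      _ < (q:ℤ)^u * ((q:ℤ)^u)^(h-1) := by
          apply mul_lt_mul_of_pos_right c2 (by positivity)
      _ = ((q:ℤ)^u)^h := by rw [← pow_succ']; congr 1; omega
      _ = (q:ℤ)^(h*u) := by rw [← pow_mul, Nat.mul_comm]
  have natdeg : ((C m₃ * X ^ 3 + C m₂ * X ^ 2 - C m₁ * X + C m₀) ^ h).natDegree < 3*h + 1 := by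
    have hd : ((C m₃ * X ^ 3 + C m₂ * X ^ 2 - C m₁ * X + C m₀) : ℤ[X]).natDegree ≤ 3 := by
      apply Polynomial.natDegree_le_iff_coeff_eq_zero.mpr
      intro j hj
      rw [coeff_t]
      have h3 : ¬ (j = 3) := by omega
      have h2 : ¬ (j = 2) := by omega
      have h1 : ¬ (j = 1) := by omega
      have h0 : ¬ (j = 0) := by omega
      rw [if_neg h3, if_neg h2, if_neg h1, if_neg h0]
      ring
    calc ((C m₃ * X ^ 3 + C m₂ * X ^ 2 - C m₁ * X + C m₀) ^ h).natDegree ≤ h * ((C m₃ * X ^ 3 + C m₂ * X ^ 2 - C m₁ * X + C m₀) : ℤ[X]).natDegree := natDegree_pow_le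
      _ ≤ h * 3 := Nat.mul_le_mul_left h hd
      _ < 3 * h + 1 := by omega
  have hzero : ∀ i, 3*h < i → ((C m₃ * X ^ 3 + C m₂ * X ^ 2 - C m₁ * X + C m₀) ^ h).coeff i = 0 := by
    intro i hi
    exact coeff_eq_zero_of_natDegree_lt (by omega : ((C m₃ * X ^ 3 + C m₂ * X ^ 2 - C m₁ * X + C m₀)^h).natDegree < i)
  have main : ∀ k : ℕ, h*u + 2*h + 1 ≤ k →
      digitSum q (((((C m₃ * X ^ 3 + C m₂ * X ^ 2 - C m₁ * X + C m₀) : ℤ[X]).eval ((q:ℤ)^k)) ^ h).toNat)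
        = (digitSum q (m₀^h).toNat + (digitSum q (q^(h*u) - ((h:ℤ) * m₁ * m₀ ^ (h-1)).toNat)
            + digitSum q ((((C m₃ * X ^ 3 + C m₂ * X ^ 2 - C m₁ * X + C m₀) ^ h).coeff 2 - 1).toNat)
            + ∑ i ∈ Finset.range (3*h-2), digitSum q ((((C m₃ * X ^ 3 + C m₂ * X ^ 2 - C m₁ * X + C m₀) ^ h).coeff (i+3)).toNat)))
          + (q-1)*(k - h*u) := by
    intro k hk
    have hku : h*u ≤ k := by omega
    have hqklt : (q:ℤ)^(h*u + 2*h) < (q:ℤ)^k := pow_lt_pow_right₀ hq1 (by omega)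
    have hqkle : (q:ℤ)^(h*u) ≤ (q:ℤ)^k := pow_le_pow_right₀ (by linarith) (by omega)
    have habslt : ∀ j, |((C m₃ * X ^ 3 + C m₂ * X ^ 2 - C m₁ * X + C m₀) ^ h).coeff j| < (q:ℤ)^k :=
      fun j => lt_of_le_of_lt (le_trans (Sz j) SzPow) hqklt
    have hqk0 : (0:ℤ) < (q:ℤ)^k := by positivity
    have hqknat : ((q^k : ℕ) : ℤ) = (q:ℤ)^k := by push_cast; ring
    set f : ℕ → ℕ := fun i => if i = 0 then (m₀^h).toNat
      else if i = 1 then ((q:ℤ)^k - (h:ℤ) * m₁ * m₀ ^ (h-1)).toNat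
      else if i = 2 then (((C m₃ * X ^ 3 + C m₂ * X ^ 2 - C m₁ * X + C m₀) ^ h).coeff 2 - 1).toNat
      else (((C m₃ * X ^ 3 + C m₂ * X ^ 2 - C m₁ * X + C m₀) ^ h).coeff i).toNat with hf
    have hf0 : f 0 = (m₀^h).toNat := by simp only [hf]; norm_num
    have hf1 : f 1 = ((q:ℤ)^k - (h:ℤ) * m₁ * m₀ ^ (h-1)).toNat := by simp only [hf]; norm_num
    have hf2 : f 2 = (((C m₃ * X ^ 3 + C m₂ * X ^ 2 - C m₁ * X + C m₀) ^ h).coeff 2 - 1).toNat := by simp only [hf]; norm_num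
    have hfge : ∀ i, 3 ≤ i → f i = (((C m₃ * X ^ 3 + C m₂ * X ^ 2 - C m₁ * X + C m₀) ^ h).coeff i).toNat := by
      intro i hi
      simp only [hf]
      rw [if_neg (by omega), if_neg (by omega), if_neg (by omega)]
    have hBzk : (h:ℤ) * m₁ * m₀ ^ (h-1) ≤ (q:ℤ)^k := le_trans (le_of_lt hBzlt) hqkle
    have cast0 : (((m₀^h).toNat : ℕ) : ℤ) = m₀^h := Int.toNat_of_nonneg (by positivity)
    have cast1 : ((((q:ℤ)^k - (h:ℤ) * m₁ * m₀ ^ (h-1)).toNat : ℕ) : ℤ)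
        = (q:ℤ)^k - (h:ℤ) * m₁ * m₀ ^ (h-1) := Int.toNat_of_nonneg (by linarith)
    have hA2 : 1 ≤ ((C m₃ * X ^ 3 + C m₂ * X ^ 2 - C m₁ * X + C m₀) ^ h).coeff 2 := Pos 2 (Or.inr ⟨le_refl 2, by omega⟩)
    have cast2 : (((((C m₃ * X ^ 3 + C m₂ * X ^ 2 - C m₁ * X + C m₀) ^ h).coeff 2 - 1).toNat : ℕ) : ℤ) = ((C m₃ * X ^ 3 + C m₂ * X ^ 2 - C m₁ * X + C m₀) ^ h).coeff 2 - 1 :=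
      Int.toNat_of_nonneg (by linarith)
    have castge : ∀ i, 3 ≤ i → (((((C m₃ * X ^ 3 + C m₂ * X ^ 2 - C m₁ * X + C m₀) ^ h).coeff i).toNat : ℕ) : ℤ) = ((C m₃ * X ^ 3 + C m₂ * X ^ 2 - C m₁ * X + C m₀) ^ h).coeff i := by
      intro i hi
      rcases le_or_gt i (3*h) with hle | hgt
      · exact Int.toNat_of_nonneg (le_trans zero_le_one (Pos i (Or.inr ⟨by omega, hle⟩)))
      · rw [hzero i hgt]; simp
    -- the evaluation equals the natural number N
    have EQ : (((C m₃ * X ^ 3 + C m₂ * X ^ 2 - C m₁ * X + C m₀) : ℤ[X]).eval ((q:ℤ)^k)) ^ h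
        = ((∑ i ∈ Finset.range (3*h+1), f i * (q^k)^i : ℕ) : ℤ) := by
      rw [← Polynomial.eval_pow, Polynomial.eval_eq_sum_range' natdeg]
      push_cast
      rw [← sub_eq_zero, ← Finset.sum_sub_distrib]
      have hterm : ∀ i ∈ Finset.range (3*h+1),
          ((C m₃ * X ^ 3 + C m₂ * X ^ 2 - C m₁ * X + C m₀) ^ h).coeff i * ((q:ℤ)^k)^i - (f i : ℤ) * ((q:ℤ)^k)^i
          = (if i = 1 then -(((q:ℤ)^k)^2) else 0) + (if i = 2 then ((q:ℤ)^k)^2 else 0) := by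
        intro i hi
        by_cases e0 : i = 0
        · subst e0
          rw [hf0, cast0, a0, if_neg (by omega), if_neg (by omega)]
          ring
        by_cases e1 : i = 1
        · subst e1
          rw [hf1, cast1, a1, if_pos rfl, if_neg (by omega)]
          ring
        by_cases e2 : i = 2
        · subst e2
          rw [hf2, cast2, if_neg (by omega), if_pos rfl]
          ring
        · rw [hfge i (by omega), castge i (by omega), if_neg e1, if_neg e2]
          ring
      rw [Finset.sum_congr rfl hterm, Finset.sum_add_distrib,
        Finset.sum_ite_eq' (Finset.range (3*h+1)) 1 (fun _ => -(((q:ℤ)^k)^2)),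
        Finset.sum_ite_eq' (Finset.range (3*h+1)) 2 (fun _ => ((q:ℤ)^k)^2)]
      rw [if_pos (Finset.mem_range.mpr (by omega)), if_pos (Finset.mem_range.mpr (by omega))]
      ring
    rw [EQ, Int.toNat_natCast]
    -- bounds for the block lemma
    have hflt : ∀ i, i < 3*h+1 → f i < q^k := by
      intro i hi
      have hcast : ∀ y : ℤ, y.toNat < q^k ↔ y < ((q^k : ℕ) : ℤ) := by
        intro y
        exact Int.toNat_lt' (by positivity)
      by_cases e0 : i = 0
      · subst e0
        rw [hf0, hcast, hqknat]
        have c1 : m₀^h < ((q:ℤ)^u)^h := pow_lt_pow_left₀ hm₀' (by linarith) (by omega)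
        have c2 : ((q:ℤ)^u)^h = (q:ℤ)^(h*u) := by rw [← pow_mul, Nat.mul_comm]
        linarith
      by_cases e1 : i = 1
      · subst e1
        rw [hf1, hcast, hqknat]
        linarith
      by_cases e2 : i = 2
      · subst e2
        rw [hf2, hcast, hqknat]
        have := habslt 2
        have := le_abs_self (((C m₃ * X ^ 3 + C m₂ * X ^ 2 - C m₁ * X + C m₀) ^ h).coeff 2)
        linarith
      · rw [hfge i (by omega), hcast, hqknat]
        have := habslt i
        have := le_abs_self (((C m₃ * X ^ 3 + C m₂ * X ^ 2 - C m₁ * X + C m₀) ^ h).coeff i)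
        linarith
    rw [digitSum_blocks hq k (3*h+1) f hflt]
    -- peel off the first three blocks
    have e3 : 3*h+1 = (3*h-2) + 1 + 1 + 1 := by omega
    rw [e3, Finset.sum_range_succ' _ ((3*h-2)+1+1), Finset.sum_range_succ' _ ((3*h-2)+1),
      Finset.sum_range_succ' _ (3*h-2)]
    have htail : ∀ i ∈ Finset.range (3*h-2),
        digitSum q (f (i+1+1+1)) = digitSum q ((((C m₃ * X ^ 3 + C m₂ * X ^ 2 - C m₁ * X + C m₀) ^ h).coeff (i+3)).toNat) := by
      intro i _
      rw [show i+1+1+1 = i+3 from by omega, hfge (i+3) (by omega)]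
    rw [Finset.sum_congr rfl htail]
    -- compute digitSum (f 1)
    have hBnz : (((h:ℤ) * m₁ * m₀ ^ (h-1)).toNat : ℤ) = (h:ℤ) * m₁ * m₀ ^ (h-1) :=
      Int.toNat_of_nonneg (by linarith)
    have hBnle : ((h:ℤ) * m₁ * m₀ ^ (h-1)).toNat ≤ q^(h*u) := by
      have : (((h:ℤ) * m₁ * m₀ ^ (h-1)).toNat : ℤ) ≤ ((q^(h*u) : ℕ) : ℤ) := by
        rw [hBnz]
        push_cast
        linarith
      exact_mod_cast this
    have hBn1 : 1 ≤ ((h:ℤ) * m₁ * m₀ ^ (h-1)).toNat := by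
      have : (1 : ℤ) ≤ (((h:ℤ) * m₁ * m₀ ^ (h-1)).toNat : ℤ) := by rw [hBnz]; exact hBz1
      exact_mod_cast this
    have hqpowle : (q:ℕ)^(h*u) ≤ q^k := Nat.pow_le_pow_right (by omega) (by omega)
    have hBnk : ((h:ℤ) * m₁ * m₀ ^ (h-1)).toNat ≤ q^k := le_trans hBnle hqpowle
    have hnat : ((q:ℤ)^k - (h:ℤ) * m₁ * m₀ ^ (h-1)).toNat
        = q^k - ((h:ℤ) * m₁ * m₀ ^ (h-1)).toNat := by
      have e : ((q^k - ((h:ℤ) * m₁ * m₀ ^ (h-1)).toNat : ℕ) : ℤ)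
          = (q:ℤ)^k - (h:ℤ) * m₁ * m₀ ^ (h-1) := by
        rw [Nat.cast_sub hBnk, hBnz, hqknat]
      rw [← e, Int.toNat_natCast]
    have hsplit : q^k - ((h:ℤ) * m₁ * m₀ ^ (h-1)).toNat
        = (q^(h*u) - ((h:ℤ) * m₁ * m₀ ^ (h-1)).toNat)
          + q^(h*u) * (q^(k - h*u) - 1) := by
      have e : ((q:ℕ)^(h*u) : ℤ) * ((q:ℕ)^(k-h*u) : ℤ) = ((q:ℕ)^k : ℤ) := by
        push_cast
        rw [← pow_add]
        congr 1
        omega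
      have h1 : 1 ≤ (q:ℕ)^(k - h*u) := Nat.one_le_pow _ _ (by omega)
      zify [h1, hBnle, hBnk]
      linarith [e]
    have hflt1 : q^(h*u) - ((h:ℤ) * m₁ * m₀ ^ (h-1)).toNat < q^(h*u) :=
      Nat.sub_lt (Nat.pow_pos (by omega)) hBn1
    have hsplit1 : digitSum q (f 1)
        = digitSum q (q^(h*u) - ((h:ℤ) * m₁ * m₀ ^ (h-1)).toNat) + (q-1)*(k - h*u) := by
      rw [hf1, hnat, hsplit, digitSum_add_pow_mul hq (h*u) _ _ hflt1,
        digitSum_pow_sub_one hq]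
    rw [show (0:ℕ)+1+1 = 2 from rfl, show (0:ℕ)+1 = 1 from rfl, hsplit1, hf2, hf0]
    ring
  -- choose k
  obtain ⟨K0, hmain⟩ : ∃ K0 : ℕ, ∀ k : ℕ, h*u + 2*h + 1 ≤ k →
      digitSum q (((((C m₃ * X ^ 3 + C m₂ * X ^ 2 - C m₁ * X + C m₀) : ℤ[X]).eval ((q:ℤ)^k)) ^ h).toNat) = K0 + (q-1)*(k - h*u) :=
    ⟨_, main⟩
  haveI : NeZero m := ⟨by omega⟩
  have hcop' : Nat.Coprime (q-1) m := Nat.coprime_comm.mp hcop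
  have hunit : IsUnit (((q - 1 : ℕ)) : ZMod m) := (ZMod.isUnit_iff_coprime _ _).mpr hcop'
  set E : ZMod m := ((q - 1 : ℕ) : ZMod m) with hE
  set tgt : ZMod m := E⁻¹ * ((g : ZMod m) - ((K0 : ℕ) : ZMod m)) with htgt
  set i : ℕ := (tgt - ((2*h+1 : ℕ) : ZMod m)).val with hi
  have him : i < m := ZMod.val_lt _
  refine ⟨h*u + 2*h + 1 + i, by omega, by omega, ?_⟩
  rw [hmain _ (by omega)]
  refine (ZMod.intCast_eq_intCast_iff _ _ _).mp ?_
  rw [show h*u + 2*h + 1 + i - h*u = 2*h+1+i from by omega]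
  rw [Nat.cast_add, Nat.cast_mul, Int.cast_add, Int.cast_mul, Int.cast_natCast,
    Int.cast_natCast, Int.cast_natCast, ← hE]
  have hival : ((i : ℕ) : ZMod m) = tgt - ((2*h+1 : ℕ) : ZMod m) := by
    rw [hi, ZMod.natCast_val, ZMod.cast_id]
  have hsum : (((2*h+1+i : ℕ)) : ZMod m) = tgt := by
    rw [Nat.cast_add, hival]
    ring
  rw [hsum, htgt, ← mul_assoc, ZMod.mul_inv_of_unit _ hunit, one_mul]
  ring
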